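/- Let n ≥ 1, let B be a nondegenerate symmetric ℚ-bilinear form on ℚⁿ, and let Λ_R ⊆ Λ be lattices in ℚⁿ with B(λ,α) ∈ ℤ for all λ ∈ Λ and α ∈ Λ_R (so that Λ_R ⊆ Λ ⊆ Λ_R^B). Let ℓ ≥ 1 be an integer with gcd(ℓ, [Λ_R^B : Λ]) = 1. Then ℓ·Λ = Λ ∩ ℓ·Λ_R^B and ℓ·Λ_R = Λ_R ∩ ℓ·Λ^B; in other words, multiplication by ℓ is a centralizer transfer map. -/

import Mathlib

/-- A lattice in `ℚⁿ`: a subgroup generated by a `ℚ`-basis. -/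
def IsLattice {n : ℕ} (L : AddSubgroup (Fin n → ℚ)) : Prop :=
  ∃ b : Module.Basis (Fin n) ℚ (Fin n → ℚ), L = AddSubgroup.closure (Set.range b)

/-- The dual lattice `L^B` of `L` with respect to a bilinear form `B`. -/
def dualLattice {n : ℕ} (B : (Fin n → ℚ) →ₗ[ℚ] (Fin n → ℚ) →ₗ[ℚ] ℚ)
    (L : AddSubgroup (Fin n → ℚ)) : AddSubgroup (Fin n → ℚ) where
  carrier := {x | ∀ y ∈ L, ∃ k : ℤ, B x y = (k : ℚ)}
  zero_mem' := fun y _ => ⟨0, by simp⟩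
  add_mem' := by
    intro a b ha hb y hy
    obtain ⟨k, hk⟩ := ha y hy
    obtain ⟨m, hm⟩ := hb y hy
    exact ⟨k + m, by simp [map_add, hk, hm]⟩
  neg_mem' := by
    intro a ha y hy
    obtain ⟨k, hk⟩ := ha y hy
    exact ⟨-k, by simp [hk]⟩

/-- The lattice `ℓ·L`. -/
def smulLat {n : ℕ} (ℓ : ℕ) (L : AddSubgroup (Fin n → ℚ)) : AddSubgroup (Fin n → ℚ) :=
  L.map (DistribMulAction.toAddMonoidHom (Fin n → ℚ) ((ℓ : ℚ)))

/-- Bezout-style combination: if `ℓ•y` and `m•y` lie in `S` and `gcd(ℓ,m)=1`, then `y ∈ S`. -/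
lemma combo_aux {V : Type*} [AddCommGroup V] (S : AddSubgroup V) (ℓ m : ℕ)
    (hcop : Nat.Coprime ℓ m) (y : V) (h1 : ℓ • y ∈ S) (h2 : m • y ∈ S) : y ∈ S := by
  obtain ⟨u, v, huv⟩ := Nat.isCoprime_iff_coprime.mpr hcop
  have hy : y = u • (ℓ • y) + v • (m • y) := by
    rw [← natCast_zsmul y ℓ, ← natCast_zsmul y m, smul_smul, smul_smul, ← add_zsmul, huv,
      one_zsmul]
  rw [hy]
  exact S.add_mem (S.zsmul_mem h1 u) (S.zsmul_mem h2 v)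

/-- Lagrange: relindex kills the quotient. -/
lemma relindex_smul_mem {V : Type*} [AddCommGroup V] (H K : AddSubgroup V)
    {z : V} (hz : z ∈ K) : (H.relIndex K) • z ∈ H := by
  have h := (H.addSubgroupOf K).nsmul_index_mem ⟨z, hz⟩
  simpa [AddSubgroup.mem_addSubgroupOf, AddSubgroup.relIndex] using h

theorem stmt2 {n : ℕ} (hn : 1 ≤ n)
    (B : (Fin n → ℚ) →ₗ[ℚ] (Fin n → ℚ) →ₗ[ℚ] ℚ)
    (hBsymm : ∀ x y, B x y = B y x)
    (hBnd : ∀ x, (∀ y, B x y = 0) → x = 0)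
    (ΛR Λ : AddSubgroup (Fin n → ℚ))
    (hΛR : IsLattice ΛR) (hΛ : IsLattice Λ) (hsub : ΛR ≤ Λ)
    (hint : ∀ lam ∈ Λ, ∀ α ∈ ΛR, ∃ k : ℤ, B lam α = (k : ℚ))
    (ℓ : ℕ) (hℓ : 1 ≤ ℓ)
    (hcop : Nat.Coprime ℓ (Λ.relIndex (dualLattice B ΛR))) :
    smulLat ℓ Λ = Λ ⊓ smulLat ℓ (dualLattice B ΛR) ∧
    smulLat ℓ ΛR = ΛR ⊓ smulLat ℓ (dualLattice B Λ) := by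
  set V := Fin n → ℚ
  set D := dualLattice B ΛR with hD
  set E := dualLattice B Λ with hE
  set m := Λ.relIndex D with hm
  -- Λ ≤ D
  have hΛD : Λ ≤ D := fun lam h α hα => hint lam h α hα
  -- ΛR ≤ E
  have hΛRE : ΛR ≤ E := by
    intro α hα lam hlam
    obtain ⟨k, hk⟩ := hint lam hlam α hα
    exact ⟨k, by rw [hBsymm]; exact hk⟩
  -- Lagrange for D/Λ
  have hLag : ∀ z ∈ D, m • z ∈ Λ := fun z hz => relindex_smul_mem Λ D hz
  -- mem smulLat
  have hmem : ∀ (L : AddSubgroup V) (x : V),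
      x ∈ smulLat ℓ L ↔ ∃ y ∈ L, (ℓ : ℚ) • y = x := by
    intro L x
    exact AddSubgroup.mem_map
  have hcast : ∀ y : V, (ℓ : ℚ) • y = ℓ • y := fun y => Nat.cast_smul_eq_nsmul ℚ ℓ y
  -- dual basis for ΛR
  obtain ⟨b, hb⟩ := hΛR
  have hinj : Function.Injective B := by
    rw [← LinearMap.ker_eq_bot, LinearMap.ker_eq_bot']
    intro x hx
    exact hBnd x fun y => by rw [hx]; rfl
  have hsurj : Function.Surjective B :=
    (LinearMap.injective_iff_surjective_of_finrank_eq_finrank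
      (Subspace.dual_finrank_eq (K := ℚ) (V := V)).symm).mp hinj
  choose v hv using fun j => hsurj (b.coord j)
  -- v j ∈ D
  have hvD : ∀ j, v j ∈ D := by
    intro j
    intro y hy
    rw [hb] at hy
    set P : AddSubgroup V :=
      AddSubgroup.comap ((B (v j)).toAddMonoidHom) (AddMonoidHom.range (Int.castAddHom ℚ))
      with hP
    have hyP : y ∈ P := by
      refine AddSubgroup.closure_le P |>.mpr ?_ hy
      rintro _ ⟨i, rfl⟩
      refine ⟨if i = j then 1 else 0, ?_⟩
      have : B (v j) (b i) = b.coord j (b i) := by rw [hv]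
      show ((if i = j then 1 else 0 : ℤ) : ℚ) = B (v j) (b i)
      rw [this, Module.Basis.coord_apply, Module.Basis.repr_self, Finsupp.single_apply]
      split_ifs <;> simp
    obtain ⟨k, hk⟩ := hyP
    exact ⟨k, by simpa using hk.symm⟩
  -- key: y ∈ E → m • y ∈ ΛR
  have hKey : ∀ y ∈ E, m • y ∈ ΛR := by
    intro y hy
    have coords : ∀ j, ∃ k : ℤ, b.repr (m • y) j = (k : ℚ) := by
      intro j
      obtain ⟨k, hk⟩ := hy (m • v j) (hLag (v j) (hvD j))
      have h1 : b.repr (m • y) j = (m : ℚ) * B (v j) y := by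
        rw [← Module.Basis.coord_apply, ← hv, map_nsmul, nsmul_eq_mul]
      have h2 : B y (m • v j) = (m : ℚ) * B (v j) y := by
        rw [map_nsmul, nsmul_eq_mul, hBsymm]
      refine ⟨k, ?_⟩
      rw [h1, ← h2, hk]
    choose k hk using coords
    have expand : m • y = ∑ j, (k j : ℚ) • b j := by
      conv_lhs => rw [← b.sum_repr (m • y)]
      exact Finset.sum_congr rfl fun j _ => by rw [hk j]
    rw [hb, expand]
    refine AddSubgroup.sum_mem _ fun j _ => ?_
    rw [Int.cast_smul_eq_zsmul]
    exact AddSubgroup.zsmul_mem _ (AddSubgroup.subset_closure (Set.mem_range_self j)) _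
  refine ⟨?_, ?_⟩
  · apply le_antisymm
    · intro x hx
      obtain ⟨y, hy, rfl⟩ := (hmem Λ x).mp hx
      refine AddSubgroup.mem_inf.mpr ⟨?_, (hmem D _).mpr ⟨y, hΛD hy, rfl⟩⟩
      rw [hcast]
      exact AddSubgroup.nsmul_mem Λ hy ℓ
    · intro x hx
      obtain ⟨hxΛ, hxs⟩ := AddSubgroup.mem_inf.mp hx
      obtain ⟨y, hyD, rfl⟩ := (hmem D x).mp hxs
      refine (hmem Λ _).mpr ⟨y, ?_, rfl⟩
      refine combo_aux Λ ℓ m hcop y ?_ (hLag y hyD)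
      rw [← hcast]; exact hxΛ
  · apply le_antisymm
    · intro x hx
      obtain ⟨y, hy, rfl⟩ := (hmem ΛR x).mp hx
      refine AddSubgroup.mem_inf.mpr ⟨?_, (hmem E _).mpr ⟨y, hΛRE hy, rfl⟩⟩
      rw [hcast]
      exact AddSubgroup.nsmul_mem ΛR hy ℓ
    · intro x hx
      obtain ⟨hxΛR, hxs⟩ := AddSubgroup.mem_inf.mp hx
      obtain ⟨y, hyE, rfl⟩ := (hmem E x).mp hxs
      refine (hmem ΛR _).mpr ⟨y, ?_, rfl⟩
      refine combo_aux ΛR ℓ m hcop y ?_ (hKey y hyE)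
      rw [← hcast]; exact hxΛR
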